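/- For the hypercube construction {((σ_1 τ)/n, ..., (σ_{k−1}τ)/n, (n − τΣσ_i)/n) : σ ∈ {0,1}^{k−1}} of histograms, any two neighboring corners θ, θ' (differing in one σ_i) correspond to databases differing in exactly τ data points; hence under α-DP, KL(Q_n(·|θ) ‖ Q_n(·|θ')) ≤ ατ, and by the Kullback–Csiszár–Kemperman (Pinsker-type) inequality the testing affinity satisfies ‖Q_n(·|θ) ∧ Q_n(·|θ')‖ ≥ 1 − √(ατ/2). -/

import Mathlib

open MeasureTheory

noncomputable def klDiv {𝒵 : Type*} [MeasurableSpace 𝒵] (μ ν : Measure 𝒵) : ℝ :=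
  ∫ z, Real.log ((μ.rnDeriv ν z).toReal) ∂μ

def IsHist (n k : ℕ) (θ : Fin k → ℝ) : Prop :=
  (∀ j, ∃ m : ℕ, θ j = (m : ℝ) / n) ∧ (∑ j, θ j) = 1

noncomputable def l1 {k : ℕ} (θ θ' : Fin k → ℝ) : ℝ := ∑ j, |θ j - θ' j|

open Classical in
/-- A corner of the hypercube
`{((σ₁τ)/n, …, (σ_{k-1}τ)/n, (n - τΣσᵢ)/n) : σ ∈ {0,1}^{k-1}}`, with `k = K+1`. -/
noncomputable def corner (n τ K : ℕ) (σ : Fin K → Bool) : Fin (K + 1) → ℝ :=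
  fun j =>
    if h : (j : ℕ) < K then (if σ ⟨j, h⟩ then (τ : ℝ) / n else 0)
    else ((n : ℝ) - τ * ((Finset.univ.filter fun i => σ i = true).card : ℝ)) / n

/- ### Auxiliary lemmas -/

lemma key_ineq (x : ℝ) (hx : 0 ≤ x) : 1 - Real.sqrt (x/2) ≤ Real.exp (-x) := by
  set t := Real.sqrt (x/2) with ht
  have ht0 : 0 ≤ t := Real.sqrt_nonneg _
  have ht2 : t^2 = x/2 := Real.sq_sqrt (by linarith)
  rcases le_or_gt 1 t with h | h
  · have := Real.exp_pos (-x); linarith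
  · have h1 : 1 - x/4 ≤ Real.exp (-(x/4)) := by
      have := Real.add_one_le_exp (-(x/4)); linarith
    have hx2 : x < 2 := by nlinarith
    have h2 : (1 - x/4)^4 ≤ (Real.exp (-(x/4)))^4 :=
      pow_le_pow_left₀ (by linarith) h1 4
    have h3 : (Real.exp (-(x/4)))^4 = Real.exp (-x) := by
      rw [← Real.exp_nat_mul]; ring_nf
    rw [h3] at h2
    have heq : (1 - x/4)^4 = (1 - t^2/2)^4 := by rw [ht2]; ring
    rw [heq] at h2
    have h1t : t ≤ 1 := h.le
    have key : 0 ≤ t^7 - 8*t^5 + 24*t^3 - 32*t + 16 := by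
      nlinarith [sq_nonneg (t-1), sq_nonneg (t+1), sq_nonneg (t^2-1), sq_nonneg (t^2+t-2),
        sq_nonneg (t^3-t), mul_nonneg ht0 (sq_nonneg (t-1)),
        mul_nonneg (sub_nonneg.2 h1t) (sq_nonneg (t-1)),
        mul_nonneg (sub_nonneg.2 h1t) (sq_nonneg (t+1)),
        mul_nonneg (mul_nonneg ht0 ht0) (sq_nonneg (t^2-1)),
        mul_nonneg (sub_nonneg.2 h1t) (sq_nonneg (t^2+t)), sq_nonneg (t^2 - 4/5)]
    nlinarith [mul_nonneg ht0 key]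

lemma corner_castSucc (n τ K : ℕ) (σ : Fin K → Bool) (j : Fin K) :
    corner n τ K σ (Fin.castSucc j) = if σ j then (τ : ℝ)/n else 0 := by
  simp [corner, j.is_lt]

lemma corner_last (n τ K : ℕ) (σ : Fin K → Bool) :
    corner n τ K σ (Fin.last K)
      = ((n : ℝ) - τ * ((Finset.univ.filter fun i => σ i = true).card : ℝ)) / n := by
  simp [corner]

lemma cnt_real {K : ℕ} (σ : Fin K → Bool) :
    ((Finset.univ.filter fun j => σ j = true).card : ℝ)
      = ∑ j, (if σ j = true then (1:ℝ) else 0) := by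
  rw [Finset.card_filter]
  push_cast
  simp

lemma cnt_update {K : ℕ} (σ : Fin K → Bool) (i : Fin K) :
    ((Finset.univ.filter fun j => Function.update σ i (!σ i) j = true).card : ℝ)
      = ((Finset.univ.filter fun j => σ j = true).card : ℝ) + (if σ i then -1 else 1) := by
  rw [cnt_real, cnt_real]
  have : ∀ j : Fin K, j ≠ i →
      (if Function.update σ i (!σ i) j = true then (1:ℝ) else 0)
        = (if σ j = true then (1:ℝ) else 0) := by
    intro j hj; rw [Function.update_of_ne hj]
  rw [← sub_eq_iff_eq_add', ← Finset.sum_sub_distrib]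
  rw [Finset.sum_eq_single i]
  · rw [Function.update_self]; cases h : σ i <;> simp [h]
  · intro j _ hj; rw [this j hj]; ring
  · simp

lemma corner_isHist {n τ K : ℕ} (hn : 0 < n) (hτK : τ * K ≤ n) (σ : Fin K → Bool) :
    IsHist n (K+1) (corner n τ K σ) := by
  have hn' : (n : ℝ) ≠ 0 := Nat.cast_ne_zero.2 hn.ne'
  have hcard : (Finset.univ.filter fun i => σ i = true).card ≤ K := by
    simpa using Finset.card_filter_le Finset.univ (fun i => σ i = true)
  have hτc : τ * (Finset.univ.filter fun i => σ i = true).card ≤ n :=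
    le_trans (Nat.mul_le_mul_left τ hcard) hτK
  constructor
  · intro j
    induction j using Fin.lastCases with
    | last =>
      refine ⟨n - τ * (Finset.univ.filter fun i => σ i = true).card, ?_⟩
      rw [corner_last]
      push_cast [Nat.cast_sub hτc]
      ring_nf
    | cast j =>
      rw [corner_castSucc]
      cases h : σ j
      · exact ⟨0, by simp⟩
      · exact ⟨τ, by simp⟩
  · rw [Fin.sum_univ_castSucc]
    simp_rw [corner_castSucc, corner_last]
    rw [← Finset.sum_filter]
    rw [Finset.sum_const, nsmul_eq_mul]
    field_simp
    ring

lemma l1_corner {n τ K : ℕ} (hn : 0 < n) (σ : Fin K → Bool) (i : Fin K) :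
    l1 (corner n τ K σ) (corner n τ K (Function.update σ i (!σ i))) = 2*τ/n := by
  have hτn : (0:ℝ) ≤ (τ:ℝ)/n := by positivity
  rw [l1, Fin.sum_univ_castSucc]
  simp_rw [corner_castSucc, corner_last]
  rw [Finset.sum_eq_single i]
  · rw [Function.update_self, cnt_update]
    have : ((n:ℝ) - ↑τ * (↑(Finset.univ.filter fun j => σ j = true).card + if σ i then -1 else 1)) / ↑n
        = ((n:ℝ) - ↑τ * ↑(Finset.univ.filter fun j => σ j = true).card) / n
            - (τ * (if σ i then (-1:ℝ) else 1))/n := by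
      split_ifs <;> field_simp <;> ring
    rw [this]
    cases h : σ i <;>
      simp [h, abs_of_nonneg hτn, abs_div,
        abs_of_nonneg (show (0:ℝ) ≤ (τ:ℝ) by positivity),
        abs_of_nonneg (show (0:ℝ) ≤ (n:ℝ) by positivity)] <;> ring
  · intro j _ hj
    rw [Function.update_of_ne hj]; simp
  · simp

lemma kl_le {𝒵 : Type*} [MeasurableSpace 𝒵] (μ ν : Measure 𝒵)
    [IsProbabilityMeasure μ] [IsProbabilityMeasure ν] (a : ℝ) (ha : 0 < a)
    (hle : ∀ B : Set 𝒵, MeasurableSet B → μ B ≤ ENNReal.ofReal (Real.exp a) * ν B) :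
    klDiv μ ν ≤ a := by
  set c : ENNReal := ENNReal.ofReal (Real.exp a) with hc
  have hc0 : c ≠ 0 := by simp [hc, Real.exp_pos]
  have hctop : c ≠ ⊤ := ENNReal.ofReal_ne_top
  have hle' : μ ≤ c • ν := by
    rw [Measure.le_iff]
    intro s hs
    rw [Measure.smul_apply, smul_eq_mul]
    exact hle s hs
  haveI : IsFiniteMeasure (c • ν) := by
    constructor
    rw [Measure.smul_apply, smul_eq_mul, measure_univ, mul_one]
    exact hctop.lt_top
  have hac : μ ≪ ν := by
    refine (Measure.absolutelyContinuous_of_le hle').trans ?_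
    intro s hs
    simp [hs]
  have hb1 : μ.rnDeriv (c • ν) ≤ᵐ[c • ν] 1 := Measure.rnDeriv_le_one_of_le hle'
  have hb1' : μ.rnDeriv (c • ν) ≤ᵐ[ν] 1 := by
    rwa [Measure.ae_ennreal_smul_measure_eq hc0] at hb1
  have hb2 : μ.rnDeriv (c • ν) =ᵐ[ν] c⁻¹ • μ.rnDeriv ν :=
    Measure.rnDeriv_smul_right_of_ne_top μ ν hc0 hctop
  have hb : μ.rnDeriv ν ≤ᵐ[ν] fun _ => c := by
    filter_upwards [hb1', hb2] with z h1 h2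
    have h3 : c⁻¹ * μ.rnDeriv ν z ≤ 1 := by
      have := h2 ▸ h1
      simpa using this
    calc μ.rnDeriv ν z = c * (c⁻¹ * μ.rnDeriv ν z) := by
            rw [← mul_assoc, ENNReal.mul_inv_cancel hc0 hctop, one_mul]
      _ ≤ c * 1 := mul_le_mul_right h3 c
      _ = c := mul_one c
  have hbμ : ∀ᵐ z ∂μ, μ.rnDeriv ν z ≤ c := hac.ae_le hb
  have hlog : ∀ᵐ z ∂μ, Real.log ((μ.rnDeriv ν z).toReal) ≤ a := by
    filter_upwards [hbμ] with z hz
    have h4 : (μ.rnDeriv ν z).toReal ≤ Real.exp a := by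
      have := ENNReal.toReal_mono hctop hz
      rwa [hc, ENNReal.toReal_ofReal (Real.exp_pos a).le] at this
    rcases eq_or_lt_of_le (ENNReal.toReal_nonneg (a := μ.rnDeriv ν z)) with h0 | h0
    · rw [← h0, Real.log_zero]; exact ha.le
    · exact (Real.log_le_iff_le_exp h0).2 h4
  by_cases hint : Integrable (fun z => Real.log ((μ.rnDeriv ν z).toReal)) μ
  · calc klDiv μ ν ≤ ∫ _, a ∂μ := integral_mono_ae hint (integrable_const _) hlog
      _ = a := by simp
  · rw [klDiv, integral_undef hint]; exact ha.le

lemma aff_ge {𝒵 : Type*} [MeasurableSpace 𝒵] (μ ν : Measure 𝒵)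
    [IsProbabilityMeasure μ] [IsProbabilityMeasure ν] (a : ℝ) (ha : 0 < a)
    (hle : ∀ B : Set 𝒵, MeasurableSet B → μ B ≤ ENNReal.ofReal (Real.exp a) * ν B) :
    ENNReal.ofReal (Real.exp (-a)) ≤ (μ ⊓ ν) Set.univ := by
  set c' : ENNReal := ENNReal.ofReal (Real.exp (-a)) with hc'
  have h1 : c' • μ ≤ μ := by
    rw [Measure.le_iff]
    intro s hs
    rw [Measure.smul_apply, smul_eq_mul]
    calc c' * μ s ≤ 1 * μ s := by
          refine mul_le_mul_left ?_ _
          rw [hc', ← ENNReal.ofReal_one]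
          exact ENNReal.ofReal_le_ofReal (Real.exp_le_one_iff.2 (by linarith))
      _ = μ s := one_mul _
  have h2 : c' • μ ≤ ν := by
    rw [Measure.le_iff]
    intro s hs
    rw [Measure.smul_apply, smul_eq_mul]
    calc c' * μ s ≤ c' * (ENNReal.ofReal (Real.exp a) * ν s) :=
          mul_le_mul_right (hle s hs) c'
      _ = (c' * ENNReal.ofReal (Real.exp a)) * ν s := by rw [mul_assoc]
      _ = ν s := by
          rw [hc', ← ENNReal.ofReal_mul (Real.exp_pos _).le, ← Real.exp_add]
          simp
  have h3 : c' • μ ≤ μ ⊓ ν := le_inf h1 h2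
  calc c' = (c' • μ) Set.univ := by
        rw [Measure.smul_apply, smul_eq_mul, measure_univ, mul_one]
    _ ≤ (μ ⊓ ν) Set.univ := Measure.le_iff'.1 h3 Set.univ

/-- **KL and affinity bounds at neighboring hypercube corners.** Under `α`-DP (so the
log density ratio is bounded by `α` per data-point change, and hence by `α·(n/2)·ℓ₁`
in general), neighboring corners `θ, θ'` differ in exactly `τ` data points, so
`KL(Q(·|θ) ‖ Q(·|θ')) ≤ ατ`, and by the Kullback–Csiszár–Kemperman (Pinsker-type)
inequality the testing affinity satisfies `‖Q(·|θ) ∧ Q(·|θ')‖ ≥ 1 - √(ατ/2)`. -/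
theorem stmt16 {𝒵 : Type*} [MeasurableSpace 𝒵] {n τ K : ℕ}
    (hn : 0 < n) (hτ : 0 < τ) (hτK : τ * K ≤ n)
    (Q : (Fin (K + 1) → ℝ) → Measure 𝒵) (hprob : ∀ θ, IsProbabilityMeasure (Q θ))
    (α : ℝ) (hα : 0 < α)
    (hDP : ∀ θ θ' : Fin (K + 1) → ℝ, IsHist n (K + 1) θ → IsHist n (K + 1) θ' →
      ∀ B : Set 𝒵, MeasurableSet B →
        Q θ B ≤ ENNReal.ofReal (Real.exp (α * ((n : ℝ) / 2) * l1 θ θ')) * Q θ' B)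
    (σ σ' : Fin K → Bool) (i : Fin K) (hne : σ' = Function.update σ i (!σ i)) :
    klDiv (Q (corner n τ K σ)) (Q (corner n τ K σ')) ≤ α * τ ∧
    ENNReal.ofReal (1 - Real.sqrt (α * τ / 2)) ≤
      (Q (corner n τ K σ) ⊓ Q (corner n τ K σ')) Set.univ := by
  haveI := hprob (corner n τ K σ)
  haveI := hprob (corner n τ K σ')
  have hn' : (n : ℝ) ≠ 0 := Nat.cast_ne_zero.2 hn.ne'
  have ha : 0 < α * τ := mul_pos hα (by exact_mod_cast hτ)
  have hl1 : l1 (corner n τ K σ) (corner n τ K σ') = 2*τ/n := by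
    rw [hne]; exact l1_corner hn σ i
  have heq : α * ((n : ℝ) / 2) * (2*τ/n) = α * τ := by field_simp
  have hle : ∀ B : Set 𝒵, MeasurableSet B →
      Q (corner n τ K σ) B ≤ ENNReal.ofReal (Real.exp (α * τ)) * Q (corner n τ K σ') B := by
    intro B hB
    have := hDP (corner n τ K σ) (corner n τ K σ')
      (corner_isHist hn hτK σ) (corner_isHist hn hτK σ') B hB
    rwa [hl1, heq] at this
  refine ⟨kl_le _ _ _ ha hle, ?_⟩
  refine le_trans (ENNReal.ofReal_le_ofReal ?_) (aff_ge _ _ _ ha hle)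
  exact key_ineq (α * τ) ha.le
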